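/- Let (X₁, X₂) and (Θ₁, Θ₂) be independent random vectors with all coordinates positive. Suppose X₁ and X₂ are identically distributed, asymptotically independent, and there is a regularly varying function R of index -α (α > 0), bounded and bounded away from 0 on every bounded interval, with P[X₁ > x] ≤ R(x) for all x > 0. If E[Θ₁^{α+ε}] < ∞ and E[Θ₂^{α+ε}] < ∞ for some ε > 0, then P[Θ₁ X₁ > x, Θ₂ X₂ > x] / R(x) → 0 as x → ∞. -/

import Mathlib

open MeasureTheory ProbabilityTheory Filter Real Topology Set

open scoped ENNReal

private lemma aux_Rpos (R : ℝ → ℝ)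
    (hRblw : ∀ K > (0:ℝ), ∃ c > (0:ℝ), ∀ x ∈ Icc (-K) K, c ≤ R x) :
    ∀ x, 0 < R x := by
  intro x
  obtain ⟨c, hc, h⟩ := hRblw (|x| + 1) (by positivity)
  have hx : x ∈ Icc (-(|x| + 1)) (|x| + 1) :=
    ⟨by linarith [neg_abs_le x], by linarith [le_abs_self x]⟩
  linarith [h x hx]

private lemma aux_lower (R : ℝ → ℝ) (α ε : ℝ) (hα : 0 < α) (hε : 0 < ε)
    (hRpos : ∀ x, 0 < R x)
    (hRrv : ∀ t > (0:ℝ), Tendsto (fun x => R (t * x) / R x) atTop (𝓝 (t ^ (-α))))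
    (hRblw : ∀ K > (0:ℝ), ∃ c > (0:ℝ), ∀ x ∈ Icc (-K) K, c ≤ R x) :
    ∃ x₄ ≥ (1:ℝ), ∃ c₃ > (0:ℝ), ∀ y, x₄ ≤ y → c₃ * y ^ (-(α+ε)) ≤ R y := by
  have h2 := hRrv 2 (by norm_num)
  have hlim : (2:ℝ) ^ (-(α+ε)) < (2:ℝ) ^ (-α) :=
    (rpow_lt_rpow_left_iff (by norm_num : (1:ℝ) < 2)).mpr (by linarith)
  obtain ⟨N, hN⟩ := eventually_atTop.mp (h2.eventually_const_lt hlim)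
  set x₄ := max N 1 with hx₄def
  have hx₄1 : (1:ℝ) ≤ x₄ := le_max_right _ _
  have hx₄0 : (0:ℝ) < x₄ := by linarith
  have h2β : (0:ℝ) < (2:ℝ) ^ (α+ε) := rpow_pos_of_pos two_pos _
  have h2βinv : (2:ℝ) ^ (α+ε) * (2:ℝ) ^ (-(α+ε)) = 1 := by
    rw [← Real.rpow_add two_pos, add_neg_cancel, Real.rpow_zero]
  have hdbl : ∀ x, x₄ ≤ x → R x ≤ 2 ^ (α+ε) * R (2*x) := by
    intro x hx
    have h1 := hN x (le_trans (le_max_left _ _) hx)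
    have h1' : (2:ℝ) ^ (-(α+ε)) * R x < R (2*x) := by
      have := (lt_div_iff₀ (hRpos x)).mp h1
      linarith
    calc R x = (2 ^ (α+ε) * 2 ^ (-(α+ε))) * R x := by rw [h2βinv, one_mul]
      _ = 2 ^ (α+ε) * (2 ^ (-(α+ε)) * R x) := by ring
      _ ≤ 2 ^ (α+ε) * R (2*x) := by nlinarith
  obtain ⟨c₀, hc₀pos, hc₀⟩ := hRblw (2*x₄) (by linarith)
  refine ⟨x₄, hx₄1, c₀ * x₄ ^ (α+ε), by positivity, ?_⟩
  have key : ∀ n : ℕ, ∀ y, x₄ ≤ y → y ≤ 2^n * (2*x₄) →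
      (c₀ * x₄ ^ (α+ε)) * y ^ (-(α+ε)) ≤ R y := by
    intro n
    induction n with
    | zero =>
      intro y h1 h2
      simp only [pow_zero, one_mul] at h2
      have hy0 : (0:ℝ) < y := by linarith
      have hRy : c₀ ≤ R y := hc₀ y ⟨by linarith, h2⟩
      have hle : x₄ ^ (α+ε) * y ^ (-(α+ε)) ≤ 1 := by
        rw [Real.rpow_neg hy0.le, ← div_eq_mul_inv, ← Real.div_rpow hx₄0.le hy0.le]
        exact Real.rpow_le_one (by positivity) (div_le_one_of_le₀ h1 hy0.le) (by linarith)
      calc (c₀ * x₄ ^ (α+ε)) * y ^ (-(α+ε)) = c₀ * (x₄ ^ (α+ε) * y ^ (-(α+ε))) := by ring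
        _ ≤ c₀ * 1 := mul_le_mul_of_nonneg_left hle hc₀pos.le
        _ = c₀ := mul_one _
        _ ≤ R y := hRy
    | succ n ih =>
      intro y h1 h2
      by_cases hcase : y ≤ 2^n * (2*x₄)
      · exact ih y h1 hcase
      push_neg at hcase
      have h2n1 : (1:ℝ) ≤ 2^n := one_le_pow₀ (by norm_num : (1:ℝ) ≤ 2)
      have hy2 : x₄ ≤ y/2 := by nlinarith
      have hy2' : y/2 ≤ 2^n * (2*x₄) := by
        rw [pow_succ] at h2; linarith
      have h5 := ih (y/2) hy2 hy2'
      have h6 := hdbl (y/2) hy2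
      have h7 : 2*(y/2) = y := by ring
      rw [h7] at h6
      have hy0 : (0:ℝ) < y := by linarith
      have h8 : (y/2) ^ (-(α+ε)) = y ^ (-(α+ε)) * 2 ^ (α+ε) := by
        rw [Real.div_rpow hy0.le (by norm_num : (0:ℝ) ≤ 2),
          Real.rpow_neg (by norm_num : (0:ℝ) ≤ 2) (α+ε)]
        field_simp
      rw [h8] at h5
      have h9 : (c₀ * x₄ ^ (α+ε)) * (y ^ (-(α+ε)) * 2 ^ (α+ε)) ≤ 2 ^ (α+ε) * R y :=
        le_trans h5 h6
      have h9' : ((c₀ * x₄ ^ (α+ε)) * y ^ (-(α+ε))) * 2 ^ (α+ε) ≤ R y * 2 ^ (α+ε) := by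
        calc ((c₀ * x₄ ^ (α+ε)) * y ^ (-(α+ε))) * 2 ^ (α+ε)
            = (c₀ * x₄ ^ (α+ε)) * (y ^ (-(α+ε)) * 2 ^ (α+ε)) := by ring
          _ ≤ 2 ^ (α+ε) * R y := h9
          _ = R y * 2 ^ (α+ε) := by ring
      exact le_of_mul_le_mul_right h9' h2β
  intro y hy
  obtain ⟨n, hn⟩ := pow_unbounded_of_one_lt y (by norm_num : (1:ℝ) < 2)
  refine key n y hy ?_
  have h2n0 : (0:ℝ) < 2^n := by positivity
  nlinarith

private lemma aux_chain (R : ℝ → ℝ) (α ε : ℝ) (hα : 0 < α) (hε : 0 < ε)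
    (hRpos : ∀ x, 0 < R x)
    (hRrv : ∀ t > (0:ℝ), Tendsto (fun x => R (t * x) / R x) atTop (𝓝 (t ^ (-α)))) :
    ∃ x₂ ≥ (1:ℝ), ∀ j : ℕ, ∀ x : ℝ, x₂ * 2^j ≤ 2*x →
      R (x / 2^j) ≤ ((2:ℝ)^j) ^ (α+ε) * R x := by
  have h := hRrv (1/2) (by norm_num)
  have heq : ((1:ℝ)/2) ^ (-α) = (2:ℝ) ^ α := by
    rw [one_div, Real.inv_rpow (by norm_num : (0:ℝ) ≤ 2), ← Real.rpow_neg (by norm_num), neg_neg]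
  have hlt : ((1:ℝ)/2) ^ (-α) < (2:ℝ) ^ (α+ε) := by
    rw [heq]
    exact (rpow_lt_rpow_left_iff (by norm_num : (1:ℝ) < 2)).mpr (by linarith)
  obtain ⟨N, hN⟩ := eventually_atTop.mp (h.eventually_lt_const hlt)
  set x₂ := max N 1 with hx₂def
  have hx₂1 : (1:ℝ) ≤ x₂ := le_max_right _ _
  have hhalf : ∀ x, x₂ ≤ x → R (x/2) ≤ 2 ^ (α+ε) * R x := by
    intro x hx
    have h1 := hN x (le_trans (le_max_left _ _) hx)
    have h2 : (1:ℝ)/2 * x = x/2 := by ring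
    rw [h2] at h1
    exact le_of_lt ((div_lt_iff₀ (hRpos x)).mp h1)
  refine ⟨x₂, hx₂1, ?_⟩
  intro j
  induction j with
  | zero =>
    intro x _
    simp
  | succ j ih =>
    intro x hx
    have h2j : (0:ℝ) < 2^j := by positivity
    have hx' : x₂ * 2^j ≤ x := by rw [pow_succ] at hx; nlinarith
    have hxx₂ : x₂ ≤ x / 2^j := (le_div_iff₀ h2j).mpr (by linarith)
    have h1 := hhalf (x/2^j) hxx₂
    have h2 : x/2^(j+1) = (x/2^j)/2 := by rw [pow_succ]; ring
    have hx0 : (0:ℝ) < x := by nlinarith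
    have h3 := ih x (by nlinarith)
    calc R (x/2^(j+1)) = R ((x/2^j)/2) := by rw [h2]
      _ ≤ 2 ^ (α+ε) * R (x/2^j) := h1
      _ ≤ 2 ^ (α+ε) * (((2:ℝ)^j) ^ (α+ε) * R x) := by
          exact mul_le_mul_of_nonneg_left h3 (rpow_pos_of_pos two_pos _).le
      _ = ((2:ℝ)^(j+1)) ^ (α+ε) * R x := by
          rw [pow_succ, Real.mul_rpow (by positivity) (by norm_num : (0:ℝ) ≤ 2)]
          ring

private lemma aux_cover_pt (θ ξ x : ℝ) (hξ : 0 < ξ) (m : ℕ)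
    (hgt : θ * ξ > x) (hθ : (2:ℝ)^m < θ) :
    ∃ j : ℕ, θ ∈ Ioc ((2:ℝ)^(m+j)) ((2:ℝ)^(m+j+1)) ∧ ξ ∈ Ioi (x / 2^(m+j+1)) := by
  have hex : ∃ n : ℕ, θ ≤ 2^(m+n+1) := by
    obtain ⟨n, hn⟩ := pow_unbounded_of_one_lt θ (by norm_num : (1:ℝ) < 2)
    exact ⟨n, hn.le.trans (pow_le_pow_right₀ (by norm_num) (by omega))⟩
  classical
  have hj1 : θ ≤ 2^(m + Nat.find hex + 1) := Nat.find_spec hex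
  have hj2 : (2:ℝ)^(m + Nat.find hex) < θ := by
    rcases Nat.eq_zero_or_pos (Nat.find hex) with h0 | hpos
    · rw [h0]; simpa using hθ
    · have hmin := Nat.find_min hex (Nat.sub_lt hpos one_pos)
      push_neg at hmin
      have heq : m + (Nat.find hex - 1) + 1 = m + Nat.find hex := by omega
      rwa [heq] at hmin
  refine ⟨Nat.find hex, ⟨hj2, hj1⟩, ?_⟩
  rw [mem_Ioi, div_lt_iff₀ (by positivity)]
  calc x < θ * ξ := hgt
    _ ≤ 2^(m + Nat.find hex + 1) * ξ := mul_le_mul_of_nonneg_right hj1 hξ.le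
    _ = ξ * 2^(m + Nat.find hex + 1) := mul_comm _ _

private lemma aux_tsum {Ω : Type*} [MeasurableSpace Ω] (μ : Measure Ω) [IsProbabilityMeasure μ]
    (Θ : Ω → ℝ) (hΘ : Measurable Θ) (β : ℝ) (hβ : 0 < β) (C₄ : ℝ) (hC₄ : 0 < C₄)
    (hmom : ∫⁻ ω, ENNReal.ofReal (Θ ω ^ β) ∂μ ≠ ⊤) :
    ∑' k : ℕ, μ (Θ ⁻¹' Ioc ((2:ℝ)^k) ((2:ℝ)^(k+1))) * ENNReal.ofReal (C₄ * ((2:ℝ)^(k+1)) ^ β)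
      ≠ ⊤ := by
  set B : ℕ → Set Ω := fun k => Θ ⁻¹' Ioc ((2:ℝ)^k) ((2:ℝ)^(k+1)) with hBdef
  have hBm : ∀ k, MeasurableSet (B k) := fun k => hΘ measurableSet_Ioc
  have hdisj : Pairwise (Function.onFun Disjoint B) := by
    have key : ∀ i j : ℕ, i < j → Disjoint (B i) (B j) := by
      intro i j hij
      rw [Set.disjoint_left]
      intro a hai haj
      have h1 : Θ a ≤ (2:ℝ)^(i+1) := hai.2
      have h2 : (2:ℝ)^j < Θ a := haj.1
      have h3 : (2:ℝ)^(i+1) ≤ (2:ℝ)^j := pow_le_pow_right₀ (by norm_num) (by omega)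
      linarith
    intro i j hij
    rcases hij.lt_or_gt with h | h
    · exact key i j h
    · exact (key j i h).symm
  have hkey : ∀ k : ℕ, μ (B k) * ENNReal.ofReal (((2:ℝ)^k) ^ β)
      ≤ ∫⁻ ω in B k, ENNReal.ofReal (Θ ω ^ β) ∂μ := by
    intro k
    have h1 : ∫⁻ _ in B k, ENNReal.ofReal (((2:ℝ)^k) ^ β) ∂μ
        = ENNReal.ofReal (((2:ℝ)^k) ^ β) * μ (B k) := setLIntegral_const _ _
    rw [← mul_comm, ← h1]
    refine setLIntegral_mono' (hBm k) ?_
    intro ω hω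
    exact ENNReal.ofReal_le_ofReal
      (Real.rpow_le_rpow (by positivity) hω.1.le hβ.le)
  have hsum : ∑' k : ℕ, ∫⁻ ω in B k, ENNReal.ofReal (Θ ω ^ β) ∂μ
      ≤ ∫⁻ ω, ENNReal.ofReal (Θ ω ^ β) ∂μ := by
    rw [← lintegral_iUnion hBm hdisj]
    exact setLIntegral_le_lintegral _ _
  have hw : ∀ k : ℕ, ENNReal.ofReal (C₄ * ((2:ℝ)^(k+1)) ^ β)
      = ENNReal.ofReal (C₄ * 2 ^ β) * ENNReal.ofReal (((2:ℝ)^k) ^ β) := by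
    intro k
    rw [← ENNReal.ofReal_mul (by positivity)]
    congr 1
    rw [pow_succ, Real.mul_rpow (by positivity) (by norm_num : (0:ℝ) ≤ 2)]
    ring
  have hle : ∑' k : ℕ, μ (B k) * ENNReal.ofReal (C₄ * ((2:ℝ)^(k+1)) ^ β)
      ≤ ENNReal.ofReal (C₄ * 2 ^ β) * ∫⁻ ω, ENNReal.ofReal (Θ ω ^ β) ∂μ := by
    calc ∑' k : ℕ, μ (B k) * ENNReal.ofReal (C₄ * ((2:ℝ)^(k+1)) ^ β)
        = ∑' k : ℕ, ENNReal.ofReal (C₄ * 2 ^ β) * (μ (B k) * ENNReal.ofReal (((2:ℝ)^k) ^ β)) := by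
          refine tsum_congr fun k => ?_
          rw [hw k]; ring
      _ = ENNReal.ofReal (C₄ * 2 ^ β) * ∑' k : ℕ, (μ (B k) * ENNReal.ofReal (((2:ℝ)^k) ^ β)) :=
          ENNReal.tsum_mul_left
      _ ≤ ENNReal.ofReal (C₄ * 2 ^ β) * ∑' k : ℕ, ∫⁻ ω in B k, ENNReal.ofReal (Θ ω ^ β) ∂μ := by
          exact mul_le_mul_right (ENNReal.tsum_le_tsum hkey) _
      _ ≤ ENNReal.ofReal (C₄ * 2 ^ β) * ∫⁻ ω, ENNReal.ofReal (Θ ω ^ β) ∂μ :=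
          mul_le_mul_right hsum _
  exact ne_top_of_le_ne_top (ENNReal.mul_ne_top ENNReal.ofReal_ne_top hmom) hle

theorem stmt_12 {Ω : Type*} [MeasurableSpace Ω] (μ : Measure Ω) [IsProbabilityMeasure μ]
    (X₁ X₂ Θ₁ Θ₂ : Ω → ℝ)
    (hX₁ : Measurable X₁) (hX₂ : Measurable X₂) (hΘ₁ : Measurable Θ₁) (hΘ₂ : Measurable Θ₂)
    (hX₁pos : ∀ ω, 0 < X₁ ω) (hX₂pos : ∀ ω, 0 < X₂ ω)
    (hΘ₁pos : ∀ ω, 0 < Θ₁ ω) (hΘ₂pos : ∀ ω, 0 < Θ₂ ω)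
    -- (X₁, X₂) independent of (Θ₁, Θ₂)
    (hindep : IndepFun (fun ω => (X₁ ω, X₂ ω)) (fun ω => (Θ₁ ω, Θ₂ ω)) μ)
    -- identically distributed
    (hid : IdentDistrib X₁ X₂ μ μ)
    -- asymptotic independence
    (hai : Tendsto (fun x => (μ {ω | X₁ ω > x ∧ X₂ ω > x}).toReal /
        (μ {ω | X₁ ω > x}).toReal) atTop (𝓝 0))
    (α : ℝ) (hα : 0 < α)
    (R : ℝ → ℝ)
    -- R regularly varying of index -α
    (hRrv : ∀ t > (0:ℝ), Tendsto (fun x => R (t * x) / R x) atTop (𝓝 (t ^ (-α))))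
    -- R bounded and bounded away from 0 on every bounded interval
    (hRbdd : ∃ C : ℝ, ∀ x, R x ≤ C)
    (hRblw : ∀ K > (0:ℝ), ∃ c > (0:ℝ), ∀ x ∈ Icc (-K) K, c ≤ R x)
    -- domination
    (hdom : ∀ x > (0:ℝ), (μ {ω | X₁ ω > x}).toReal ≤ R x)
    (ε : ℝ) (hε : 0 < ε)
    (hmom₁ : ∫⁻ ω, ENNReal.ofReal (Θ₁ ω ^ (α + ε)) ∂μ ≠ ⊤)
    (hmom₂ : ∫⁻ ω, ENNReal.ofReal (Θ₂ ω ^ (α + ε)) ∂μ ≠ ⊤) :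
    Tendsto (fun x => (μ {ω | Θ₁ ω * X₁ ω > x ∧ Θ₂ ω * X₂ ω > x}).toReal / R x)
      atTop (𝓝 0) := by
  have hRpos := aux_Rpos R hRblw
  obtain ⟨x₂, hx₂1, hchain⟩ := aux_chain R α ε hα hε hRpos hRrv
  obtain ⟨x₄, hx₄1, c₃, hc₃, hlow⟩ := aux_lower R α ε hα hε hRpos hRrv hRblw
  have hβpos : (0:ℝ) < α + ε := by linarith
  set X₀ := max x₂ x₄ with hX₀def
  set C₄ := max 1 (x₂ ^ (α+ε) / c₃) with hC₄def
  have hx₂0 : (0:ℝ) < x₂ := by linarith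
  have hC₄1 : (1:ℝ) ≤ C₄ := le_max_left _ _
  have hC₄pos : (0:ℝ) < C₄ := by linarith
  have hX₀1 : (1:ℝ) ≤ X₀ := le_trans hx₂1 (le_max_left _ _)
  -- marginal tail bound
  have hF : ∀ x, X₀ ≤ x → ∀ k : ℕ,
      (μ (X₁ ⁻¹' Ioi (x / 2^(k+1)))).toReal ≤ C₄ * ((2:ℝ)^(k+1)) ^ (α+ε) * R x := by
    intro x hx k
    have hx0 : (0:ℝ) < x := by linarith
    have hpow : (0:ℝ) < (2:ℝ)^(k+1) := by positivity
    have hrnn : (0:ℝ) ≤ ((2:ℝ)^(k+1)) ^ (α+ε) := Real.rpow_nonneg hpow.le _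
    have hpre : (X₁ ⁻¹' Ioi (x / 2^(k+1))) = {ω | X₁ ω > x / 2^(k+1)} := rfl
    by_cases hcase : x₂ * 2^(k+1) ≤ 2*x
    · have h1 : (μ (X₁ ⁻¹' Ioi (x / 2^(k+1)))).toReal ≤ R (x / 2^(k+1)) := by
        rw [hpre]; exact hdom _ (by positivity)
      calc (μ (X₁ ⁻¹' Ioi (x / 2^(k+1)))).toReal ≤ R (x / 2^(k+1)) := h1
        _ ≤ ((2:ℝ)^(k+1)) ^ (α+ε) * R x := hchain (k+1) x hcase
        _ = 1 * (((2:ℝ)^(k+1)) ^ (α+ε) * R x) := (one_mul _).symm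
        _ ≤ C₄ * (((2:ℝ)^(k+1)) ^ (α+ε) * R x) :=
            mul_le_mul_of_nonneg_right hC₄1 (mul_nonneg hrnn (hRpos x).le)
        _ = C₄ * ((2:ℝ)^(k+1)) ^ (α+ε) * R x := (mul_assoc _ _ _).symm
    · push_neg at hcase
      have hle1 : (μ (X₁ ⁻¹' Ioi (x / 2^(k+1)))).toReal ≤ 1 := by
        have h := ENNReal.toReal_mono (measure_ne_top μ univ)
          (measure_mono (subset_univ (X₁ ⁻¹' Ioi (x / 2^(k+1)))))
        simpa using h
      have hx₄x : x₄ ≤ x := le_trans (le_max_right _ _) hx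
      have hRx := hlow x hx₄x
      have hdiv : x / x₂ ≤ (2:ℝ)^(k+1) := by
        rw [div_le_iff₀ hx₂0]; nlinarith
      have h1 : (x / x₂) ^ (α+ε) ≤ ((2:ℝ)^(k+1)) ^ (α+ε) :=
        Real.rpow_le_rpow (by positivity) hdiv hβpos.le
      have h2 : x ^ (α+ε) ≤ x₂ ^ (α+ε) * ((2:ℝ)^(k+1)) ^ (α+ε) := by
        have hd : (x/x₂) ^ (α+ε) = x ^ (α+ε) / x₂ ^ (α+ε) := Real.div_rpow hx0.le hx₂0.le _
        have hx₂β : (0:ℝ) < x₂ ^ (α+ε) := Real.rpow_pos_of_pos hx₂0 _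
        rw [hd] at h1
        calc x ^ (α+ε) = x₂ ^ (α+ε) * (x ^ (α+ε) / x₂ ^ (α+ε)) := by field_simp
          _ ≤ x₂ ^ (α+ε) * ((2:ℝ)^(k+1)) ^ (α+ε) := mul_le_mul_of_nonneg_left h1 hx₂β.le
      have h4 : x ^ (-(α+ε)) ≤ R x / c₃ := by
        rw [le_div_iff₀ hc₃]; linarith
      have h3 : (1:ℝ) ≤ C₄ * ((2:ℝ)^(k+1)) ^ (α+ε) * R x := by
        have hxβ : x ^ (α+ε) * x ^ (-(α+ε)) = 1 := by
          rw [← Real.rpow_add hx0, add_neg_cancel, Real.rpow_zero]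
        have h5 : (1:ℝ) ≤ (x₂ ^ (α+ε) * ((2:ℝ)^(k+1)) ^ (α+ε)) * (R x / c₃) := by
          calc (1:ℝ) = x ^ (α+ε) * x ^ (-(α+ε)) := hxβ.symm
            _ ≤ (x₂ ^ (α+ε) * ((2:ℝ)^(k+1)) ^ (α+ε)) * (R x / c₃) :=
                mul_le_mul h2 h4 (Real.rpow_nonneg hx0.le _) (by positivity)
        have h6 : (x₂ ^ (α+ε) * ((2:ℝ)^(k+1)) ^ (α+ε)) * (R x / c₃)
            = (x₂ ^ (α+ε) / c₃) * ((2:ℝ)^(k+1)) ^ (α+ε) * R x := by ring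
        rw [h6] at h5
        have h7 : x₂ ^ (α+ε) / c₃ ≤ C₄ := le_max_right _ _
        have h8 : (x₂ ^ (α+ε) / c₃) * ((2:ℝ)^(k+1)) ^ (α+ε) * R x
            ≤ C₄ * ((2:ℝ)^(k+1)) ^ (α+ε) * R x := by
          have h9 := mul_le_mul_of_nonneg_right h7 (mul_nonneg hrnn (hRpos x).le)
          calc (x₂ ^ (α+ε) / c₃) * ((2:ℝ)^(k+1)) ^ (α+ε) * R x
              = (x₂ ^ (α+ε) / c₃) * (((2:ℝ)^(k+1)) ^ (α+ε) * R x) := mul_assoc _ _ _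
            _ ≤ C₄ * (((2:ℝ)^(k+1)) ^ (α+ε) * R x) := h9
            _ = C₄ * ((2:ℝ)^(k+1)) ^ (α+ε) * R x := (mul_assoc _ _ _).symm
        linarith
      linarith
  -- independence of coordinates
  have hind1 : IndepFun Θ₁ X₁ μ := hindep.symm.comp measurable_fst measurable_fst
  have hind2 : IndepFun Θ₂ X₂ μ := hindep.symm.comp measurable_snd measurable_snd
  set f₁ : ℕ → ℝ≥0∞ := fun k =>
    μ (Θ₁ ⁻¹' Ioc ((2:ℝ)^k) ((2:ℝ)^(k+1))) * ENNReal.ofReal (C₄ * ((2:ℝ)^(k+1)) ^ (α+ε))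
    with hf₁def
  set f₂ : ℕ → ℝ≥0∞ := fun k =>
    μ (Θ₂ ⁻¹' Ioc ((2:ℝ)^k) ((2:ℝ)^(k+1))) * ENNReal.ofReal (C₄ * ((2:ℝ)^(k+1)) ^ (α+ε))
    with hf₂def
  have hf₁fin : ∑' k, f₁ k ≠ ⊤ := aux_tsum μ Θ₁ hΘ₁ (α+ε) hβpos C₄ hC₄pos hmom₁
  have hf₂fin : ∑' k, f₂ k ≠ ⊤ := aux_tsum μ Θ₂ hΘ₂ (α+ε) hβpos C₄ hC₄pos hmom₂
  have hflip : ∀ (f : ℕ → ℝ≥0∞) (m : ℕ), ∑' (j:ℕ), f (m+j) = ∑' (j:ℕ), f (j+m) :=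
    fun f m => tsum_congr (fun j => by rw [Nat.add_comm])
  have hSfin : ∀ m : ℕ, (∑' (j:ℕ), f₁ (m+j)) + (∑' (j:ℕ), f₂ (m+j)) ≠ ⊤ := by
    intro m
    have h1 : ∑' (j:ℕ), f₁ (m+j) ≤ ∑' k, f₁ k := by
      rw [hflip]
      exact ENNReal.tsum_comp_le_tsum_of_injective (add_left_injective m) f₁
    have h2 : ∑' (j:ℕ), f₂ (m+j) ≤ ∑' k, f₂ k := by
      rw [hflip]
      exact ENNReal.tsum_comp_le_tsum_of_injective (add_left_injective m) f₂
    exact ENNReal.add_ne_top.mpr ⟨ne_top_of_le_ne_top hf₁fin h1, ne_top_of_le_ne_top hf₂fin h2⟩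
  have hstend : Tendsto (fun m : ℕ => ((∑' (j:ℕ), f₁ (m+j)) + (∑' (j:ℕ), f₂ (m+j))).toReal)
      atTop (𝓝 0) := by
    have h1 := ENNReal.tendsto_sum_nat_add f₁ hf₁fin
    have h2 := ENNReal.tendsto_sum_nat_add f₂ hf₂fin
    have h3 : Tendsto (fun m : ℕ => (∑' (j:ℕ), f₁ (m+j)) + (∑' (j:ℕ), f₂ (m+j)))
        atTop (𝓝 0) := by
      rw [show (fun m : ℕ => (∑' (j:ℕ), f₁ (m+j)) + (∑' (j:ℕ), f₂ (m+j)))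
          = fun m => (∑' (j:ℕ), f₁ (j+m)) + (∑' (j:ℕ), f₂ (j+m)) from
          funext fun m => by rw [hflip f₁ m, hflip f₂ m]]
      simpa using h1.add h2
    have h4 := (ENNReal.tendsto_toReal (by simp : (0:ℝ≥0∞) ≠ ⊤)).comp h3
    simpa [Function.comp_def] using h4
  -- J ≤ q * R
  have hJ : ∀ y : ℝ, 0 < y → (μ {ω | X₁ ω > y ∧ X₂ ω > y}).toReal ≤
      ((μ {ω | X₁ ω > y ∧ X₂ ω > y}).toReal / (μ {ω | X₁ ω > y}).toReal) * R y := by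
    intro y hy
    set J := (μ {ω | X₁ ω > y ∧ X₂ ω > y}).toReal with hJdef
    set F := (μ {ω | X₁ ω > y}).toReal with hFdef
    have hJF : J ≤ F := ENNReal.toReal_mono (measure_ne_top μ _)
      (measure_mono (fun ω hω => hω.1))
    have hJ0 : (0:ℝ) ≤ J := ENNReal.toReal_nonneg
    rcases eq_or_lt_of_le (ENNReal.toReal_nonneg : (0:ℝ) ≤ F) with hF0 | hF0
    · have hJe : J = 0 := le_antisymm (by linarith) hJ0
      simp [hJe]
    · have hFR : F ≤ R y := hdom y hy
      calc J = (J / F) * F := by exact (div_mul_cancel₀ J (show F ≠ 0 from hF0.ne')).symm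
        _ ≤ (J / F) * R y := mul_le_mul_of_nonneg_left hFR (div_nonneg hJ0 hF0.le)
  -- middle term tendsto
  have hmid : ∀ m : ℕ, Tendsto (fun x => (μ {ω | X₁ ω > x/2^m ∧ X₂ ω > x/2^m}).toReal / R x)
      atTop (𝓝 0) := by
    intro m
    have h2m : (0:ℝ) < 2^m := by positivity
    have h1 : Tendsto (fun x:ℝ => x / 2^m) atTop atTop :=
      Tendsto.atTop_div_const h2m tendsto_id
    have h2 : Tendsto (fun x : ℝ => (μ {ω | X₁ ω > x/2^m ∧ X₂ ω > x/2^m}).toReal /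
        (μ {ω | X₁ ω > x/2^m}).toReal) atTop (𝓝 0) := hai.comp h1
    have h3 := hRrv ((2:ℝ)^m)⁻¹ (by positivity)
    have h3' : Tendsto (fun x => R (x/2^m) / R x) atTop (𝓝 ((((2:ℝ)^m)⁻¹) ^ (-α))) := by
      simpa [inv_mul_eq_div] using h3
    have h4 : Tendsto (fun x : ℝ => ((μ {ω | X₁ ω > x/2^m ∧ X₂ ω > x/2^m}).toReal /
        (μ {ω | X₁ ω > x/2^m}).toReal) * (R (x/2^m) / R x)) atTop (𝓝 0) := by
      simpa using h2.mul h3'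
    refine tendsto_of_tendsto_of_tendsto_of_le_of_le' tendsto_const_nhds h4 ?_ ?_
    · exact Eventually.of_forall fun x => div_nonneg ENNReal.toReal_nonneg (hRpos x).le
    · filter_upwards [eventually_ge_atTop (1:ℝ)] with x hx
      have hy : (0:ℝ) < x / 2^m := by positivity
      have hJy := hJ (x/2^m) hy
      calc (μ {ω | X₁ ω > x/2^m ∧ X₂ ω > x/2^m}).toReal / R x
          ≤ (((μ {ω | X₁ ω > x/2^m ∧ X₂ ω > x/2^m}).toReal /
              (μ {ω | X₁ ω > x/2^m}).toReal) * R (x/2^m)) / R x :=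
            (div_le_div_iff_of_pos_right (hRpos x)).mpr hJy
        _ = ((μ {ω | X₁ ω > x/2^m ∧ X₂ ω > x/2^m}).toReal /
              (μ {ω | X₁ ω > x/2^m}).toReal) * (R (x/2^m) / R x) := by ring
  -- main inequality
  have hmain : ∀ m : ℕ, ∀ x : ℝ, X₀ ≤ x →
      (μ {ω | Θ₁ ω * X₁ ω > x ∧ Θ₂ ω * X₂ ω > x}).toReal / R x ≤
      (μ {ω | X₁ ω > x/2^m ∧ X₂ ω > x/2^m}).toReal / R x
        + ((∑' (j:ℕ), f₁ (m+j)) + (∑' (j:ℕ), f₂ (m+j))).toReal := by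
    intro m x hx
    have hx0 : (0:ℝ) < x := by linarith
    have hcov : {ω | Θ₁ ω * X₁ ω > x ∧ Θ₂ ω * X₂ ω > x} ⊆
        {ω | X₁ ω > x/2^m ∧ X₂ ω > x/2^m}
        ∪ ((⋃ j : ℕ, (Θ₁ ⁻¹' Ioc ((2:ℝ)^(m+j)) ((2:ℝ)^(m+j+1)) ∩
              X₁ ⁻¹' Ioi (x / 2^(m+j+1))))
          ∪ (⋃ j : ℕ, (Θ₂ ⁻¹' Ioc ((2:ℝ)^(m+j)) ((2:ℝ)^(m+j+1)) ∩
              X₂ ⁻¹' Ioi (x / 2^(m+j+1))))) := by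
      intro ω hω
      obtain ⟨h1, h2⟩ := hω
      by_cases ht1 : (2:ℝ)^m < Θ₁ ω
      · obtain ⟨j, hj1, hj2⟩ := aux_cover_pt (Θ₁ ω) (X₁ ω) x (hX₁pos ω) m h1 ht1
        exact Or.inr (Or.inl (mem_iUnion.mpr ⟨j, ⟨hj1, hj2⟩⟩))
      · by_cases ht2 : (2:ℝ)^m < Θ₂ ω
        · obtain ⟨j, hj1, hj2⟩ := aux_cover_pt (Θ₂ ω) (X₂ ω) x (hX₂pos ω) m h2 ht2
          exact Or.inr (Or.inr (mem_iUnion.mpr ⟨j, ⟨hj1, hj2⟩⟩))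
        · push_neg at ht1 ht2
          left
          constructor
          · show x / 2^m < X₁ ω
            rw [div_lt_iff₀ (by positivity : (0:ℝ) < 2^m)]
            calc x < Θ₁ ω * X₁ ω := h1
              _ ≤ 2^m * X₁ ω := mul_le_mul_of_nonneg_right ht1 (hX₁pos ω).le
              _ = X₁ ω * 2^m := mul_comm _ _
          · show x / 2^m < X₂ ω
            rw [div_lt_iff₀ (by positivity : (0:ℝ) < 2^m)]
            calc x < Θ₂ ω * X₂ ω := h2
              _ ≤ 2^m * X₂ ω := mul_le_mul_of_nonneg_right ht2 (hX₂pos ω).le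
              _ = X₂ ω * 2^m := mul_comm _ _
    have hprod1 : ∀ j : ℕ,
        μ (Θ₁ ⁻¹' Ioc ((2:ℝ)^(m+j)) ((2:ℝ)^(m+j+1)) ∩ X₁ ⁻¹' Ioi (x / 2^(m+j+1)))
        = μ (Θ₁ ⁻¹' Ioc ((2:ℝ)^(m+j)) ((2:ℝ)^(m+j+1))) * μ (X₁ ⁻¹' Ioi (x / 2^(m+j+1))) :=
      fun j => (indepFun_iff_measure_inter_preimage_eq_mul.mp hind1) _ _
        measurableSet_Ioc measurableSet_Ioi
    have hprod2 : ∀ j : ℕ,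
        μ (Θ₂ ⁻¹' Ioc ((2:ℝ)^(m+j)) ((2:ℝ)^(m+j+1)) ∩ X₂ ⁻¹' Ioi (x / 2^(m+j+1)))
        = μ (Θ₂ ⁻¹' Ioc ((2:ℝ)^(m+j)) ((2:ℝ)^(m+j+1))) * μ (X₂ ⁻¹' Ioi (x / 2^(m+j+1))) :=
      fun j => (indepFun_iff_measure_inter_preimage_eq_mul.mp hind2) _ _
        measurableSet_Ioc measurableSet_Ioi
    have hX2eq : ∀ y : ℝ, μ (X₂ ⁻¹' Ioi y) = μ (X₁ ⁻¹' Ioi y) :=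
      fun y => (hid.measure_mem_eq measurableSet_Ioi).symm
    have hDbound : ∀ j : ℕ, μ (X₁ ⁻¹' Ioi (x / 2^(m+j+1)))
        ≤ ENNReal.ofReal (C₄ * ((2:ℝ)^(m+j+1)) ^ (α+ε)) * ENNReal.ofReal (R x) := by
      intro j
      have hFx := hF x hx (m+j)
      rw [← ENNReal.ofReal_mul (mul_nonneg hC₄pos.le (Real.rpow_nonneg (by positivity) _))]
      refine (ENNReal.le_ofReal_iff_toReal_le (measure_ne_top μ _) ?_).mpr hFx
      exact mul_nonneg (mul_nonneg hC₄pos.le (Real.rpow_nonneg (by positivity) _)) (hRpos x).le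
    have hμ1 : μ (⋃ j : ℕ, (Θ₁ ⁻¹' Ioc ((2:ℝ)^(m+j)) ((2:ℝ)^(m+j+1)) ∩
          X₁ ⁻¹' Ioi (x / 2^(m+j+1))))
        ≤ (∑' (j:ℕ), f₁ (m+j)) * ENNReal.ofReal (R x) := by
      calc μ (⋃ j : ℕ, (Θ₁ ⁻¹' Ioc ((2:ℝ)^(m+j)) ((2:ℝ)^(m+j+1)) ∩
            X₁ ⁻¹' Ioi (x / 2^(m+j+1))))
          ≤ ∑' j : ℕ, μ (Θ₁ ⁻¹' Ioc ((2:ℝ)^(m+j)) ((2:ℝ)^(m+j+1)) ∩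
            X₁ ⁻¹' Ioi (x / 2^(m+j+1))) := measure_iUnion_le _
        _ ≤ ∑' j : ℕ, f₁ (m+j) * ENNReal.ofReal (R x) := by
            refine ENNReal.tsum_le_tsum fun j => ?_
            rw [hprod1 j]
            simp only [hf₁def]
            rw [mul_assoc]
            exact mul_le_mul_right (hDbound j) _
        _ = (∑' (j:ℕ), f₁ (m+j)) * ENNReal.ofReal (R x) := ENNReal.tsum_mul_right
    have hμ2 : μ (⋃ j : ℕ, (Θ₂ ⁻¹' Ioc ((2:ℝ)^(m+j)) ((2:ℝ)^(m+j+1)) ∩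
          X₂ ⁻¹' Ioi (x / 2^(m+j+1))))
        ≤ (∑' (j:ℕ), f₂ (m+j)) * ENNReal.ofReal (R x) := by
      calc μ (⋃ j : ℕ, (Θ₂ ⁻¹' Ioc ((2:ℝ)^(m+j)) ((2:ℝ)^(m+j+1)) ∩
            X₂ ⁻¹' Ioi (x / 2^(m+j+1))))
          ≤ ∑' j : ℕ, μ (Θ₂ ⁻¹' Ioc ((2:ℝ)^(m+j)) ((2:ℝ)^(m+j+1)) ∩
            X₂ ⁻¹' Ioi (x / 2^(m+j+1))) := measure_iUnion_le _
        _ ≤ ∑' j : ℕ, f₂ (m+j) * ENNReal.ofReal (R x) := by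
            refine ENNReal.tsum_le_tsum fun j => ?_
            rw [hprod2 j, hX2eq]
            simp only [hf₂def]
            rw [mul_assoc]
            exact mul_le_mul_right (hDbound j) _
        _ = (∑' (j:ℕ), f₂ (m+j)) * ENNReal.ofReal (R x) := ENNReal.tsum_mul_right
    have hchain2 : μ {ω | Θ₁ ω * X₁ ω > x ∧ Θ₂ ω * X₂ ω > x}
        ≤ μ {ω | X₁ ω > x/2^m ∧ X₂ ω > x/2^m}
          + ((∑' (j:ℕ), f₁ (m+j)) + (∑' (j:ℕ), f₂ (m+j))) * ENNReal.ofReal (R x) := by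
      calc μ {ω | Θ₁ ω * X₁ ω > x ∧ Θ₂ ω * X₂ ω > x}
          ≤ μ ({ω | X₁ ω > x/2^m ∧ X₂ ω > x/2^m}
            ∪ ((⋃ j : ℕ, (Θ₁ ⁻¹' Ioc ((2:ℝ)^(m+j)) ((2:ℝ)^(m+j+1)) ∩
                X₁ ⁻¹' Ioi (x / 2^(m+j+1))))
              ∪ (⋃ j : ℕ, (Θ₂ ⁻¹' Ioc ((2:ℝ)^(m+j)) ((2:ℝ)^(m+j+1)) ∩
                X₂ ⁻¹' Ioi (x / 2^(m+j+1)))))) := measure_mono hcov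
        _ ≤ μ {ω | X₁ ω > x/2^m ∧ X₂ ω > x/2^m}
            + μ ((⋃ j : ℕ, (Θ₁ ⁻¹' Ioc ((2:ℝ)^(m+j)) ((2:ℝ)^(m+j+1)) ∩
                X₁ ⁻¹' Ioi (x / 2^(m+j+1))))
              ∪ (⋃ j : ℕ, (Θ₂ ⁻¹' Ioc ((2:ℝ)^(m+j)) ((2:ℝ)^(m+j+1)) ∩
                X₂ ⁻¹' Ioi (x / 2^(m+j+1))))) := measure_union_le _ _
        _ ≤ μ {ω | X₁ ω > x/2^m ∧ X₂ ω > x/2^m}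
            + (μ (⋃ j : ℕ, (Θ₁ ⁻¹' Ioc ((2:ℝ)^(m+j)) ((2:ℝ)^(m+j+1)) ∩
                X₁ ⁻¹' Ioi (x / 2^(m+j+1))))
              + μ (⋃ j : ℕ, (Θ₂ ⁻¹' Ioc ((2:ℝ)^(m+j)) ((2:ℝ)^(m+j+1)) ∩
                X₂ ⁻¹' Ioi (x / 2^(m+j+1))))) :=
            add_le_add_right (measure_union_le _ _) _
        _ ≤ μ {ω | X₁ ω > x/2^m ∧ X₂ ω > x/2^m}
            + ((∑' (j:ℕ), f₁ (m+j)) * ENNReal.ofReal (R x)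
              + (∑' (j:ℕ), f₂ (m+j)) * ENNReal.ofReal (R x)) :=
            add_le_add_right (add_le_add hμ1 hμ2) _
        _ = μ {ω | X₁ ω > x/2^m ∧ X₂ ω > x/2^m}
            + ((∑' (j:ℕ), f₁ (m+j)) + (∑' (j:ℕ), f₂ (m+j))) * ENNReal.ofReal (R x) := by
            rw [← add_mul]
    have hmulne : ((∑' (j:ℕ), f₁ (m+j)) + (∑' (j:ℕ), f₂ (m+j))) * ENNReal.ofReal (R x) ≠ ⊤ :=
      ENNReal.mul_ne_top (hSfin m) ENNReal.ofReal_ne_top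
    have hRHSne : μ {ω | X₁ ω > x/2^m ∧ X₂ ω > x/2^m}
        + ((∑' (j:ℕ), f₁ (m+j)) + (∑' (j:ℕ), f₂ (m+j))) * ENNReal.ofReal (R x) ≠ ⊤ :=
      ENNReal.add_ne_top.mpr ⟨measure_ne_top μ _, hmulne⟩
    have htr := ENNReal.toReal_mono hRHSne hchain2
    rw [ENNReal.toReal_add (measure_ne_top μ _) hmulne,
      ENNReal.toReal_mul, ENNReal.toReal_ofReal (hRpos x).le] at htr
    have hdivle := (div_le_div_iff_of_pos_right (hRpos x)).mpr htr
    have heq : ((μ {ω | X₁ ω > x/2^m ∧ X₂ ω > x/2^m}).toReal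
        + ((∑' (j:ℕ), f₁ (m+j)) + (∑' (j:ℕ), f₂ (m+j))).toReal * R x) / R x
        = (μ {ω | X₁ ω > x/2^m ∧ X₂ ω > x/2^m}).toReal / R x
          + ((∑' (j:ℕ), f₁ (m+j)) + (∑' (j:ℕ), f₂ (m+j))).toReal := by
      rw [add_div, mul_div_assoc, div_self (ne_of_gt (hRpos x)), mul_one]
    rw [heq] at hdivle
    exact hdivle
  -- final epsilon argument
  rw [Metric.tendsto_atTop]
  intro η hη
  obtain ⟨m, hm⟩ := (hstend.eventually_lt_const (half_pos hη)).exists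
  obtain ⟨N, hN⟩ := eventually_atTop.mp ((hmid m).eventually_lt_const (half_pos hη))
  refine ⟨max N X₀, fun x hx => ?_⟩
  have hx1 : X₀ ≤ x := le_trans (le_max_right _ _) hx
  have hx2 : N ≤ x := le_trans (le_max_left _ _) hx
  have hb := hmain m x hx1
  rw [Real.dist_eq, sub_zero,
    abs_of_nonneg (div_nonneg ENNReal.toReal_nonneg (hRpos x).le)]
  calc (μ {ω | Θ₁ ω * X₁ ω > x ∧ Θ₂ ω * X₂ ω > x}).toReal / R x
      ≤ (μ {ω | X₁ ω > x/2^m ∧ X₂ ω > x/2^m}).toReal / R x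
        + ((∑' (j:ℕ), f₁ (m+j)) + (∑' (j:ℕ), f₂ (m+j))).toReal := hb
    _ < η/2 + η/2 := add_lt_add (hN x hx2) hm
    _ = η := add_halves η
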